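/- There exists a set W of integral points of SATP_LP(m,n) with |W| = 2^{min(m,n)} such that any two distinct elements of W are adjacent as vertices of SATP(m,n); hence the clique number of the 1-skeleton of SATP(m,n) is at least 2^{min(m,n)}. -/

import Mathlib

open Finset

/-- A point of ℝ^{6mn}: coordinates x^{k,l}_{i,j} with `i : Fin m`, `j : Fin n`,
`k : Fin 3` (the paper's k-1, since the paper indexes k ∈ {1,2,3}) and
`l : Fin 2` (the paper's l-1). -/
abbrev Pt (m n : ℕ) := Fin m → Fin n → Fin 3 → Fin 2 → ℝ

/-- The relaxation polytope SATP_LP(m,n), given by the constraints (i)-(iv). -/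
def SATPLP (m n : ℕ) : Set (Pt m n) :=
  {x | (∀ i j, ∑ k, ∑ l, x i j k l = 1) ∧
       (∀ i j t, ∑ k, x i j k 0 = ∑ k, x i t k 0) ∧
       (∀ k j i s, x i j k 0 + x i j k 1 = x s j k 0 + x s j k 1) ∧
       (∀ i j k l, 0 ≤ x i j k l)}

/-- The integral points of SATP_LP(m,n): the points all of whose coordinates are 0 or 1. -/
def IntPts (m n : ℕ) : Set (Pt m n) :=
  {x | x ∈ SATPLP m n ∧ ∀ i j k l, x i j k l = 0 ∨ x i j k l = 1}

/-- SATP(m,n): the convex hull of the integral points of SATP_LP(m,n). -/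
def SATP (m n : ℕ) : Set (Pt m n) := convexHull ℝ (IntPts m n)

/-- Two distinct integral points u, v of SATP_LP(m,n) are adjacent (as vertices of
SATP(m,n)) iff the segment [u,v] is disjoint from the convex hull of the remaining
integral points. -/
def IsAdjacent {m n : ℕ} (u v : Pt m n) : Prop :=
  u ∈ IntPts m n ∧ v ∈ IntPts m n ∧ u ≠ v ∧
  segment ℝ u v ∩ convexHull ℝ (IntPts m n \ {u, v}) = ∅

/-- the generic product vertex -/
def vert {m n : ℕ} (K : Fin n → Fin 3) (L : Fin m → Fin 2) : Pt m n :=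
  fun i j k l => if k = K j ∧ l = L i then 1 else 0

lemma vert_eq_one_iff {m n : ℕ} (K : Fin n → Fin 3) (L : Fin m → Fin 2)
    (i : Fin m) (j : Fin n) (k : Fin 3) (l : Fin 2) :
    vert K L i j k l = 1 ↔ (k = K j ∧ l = L i) := by
  unfold vert; split_ifs with h <;> simp [h]

lemma vert_mem {m n : ℕ} (K : Fin n → Fin 3) (L : Fin m → Fin 2) :
    vert K L ∈ IntPts m n := by
  have hsum : ∀ (K0 : Fin 3) (L0 : Fin 2),
      ∑ k, ∑ l, (if k = K0 ∧ l = L0 then (1:ℝ) else 0) = 1 := by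
    intro K0 L0; fin_cases K0 <;> fin_cases L0 <;>
      simp [Fin.sum_univ_succ] <;> decide
  have hcol : ∀ (K0 : Fin 3) (L0 : Fin 2),
      ∑ k, (if k = K0 ∧ (0:Fin 2) = L0 then (1:ℝ) else 0)
        = if (0:Fin 2) = L0 then 1 else 0 := by
    intro K0 L0; fin_cases K0 <;> fin_cases L0 <;>
      simp [Fin.sum_univ_succ] <;> decide
  refine ⟨⟨fun i j => hsum (K j) (L i), fun i j t => ?_, fun k j i s => ?_, fun i j k l => ?_⟩,
      fun i j k l => ?_⟩
  · show ∑ k, (if k = K j ∧ (0:Fin 2) = L i then (1:ℝ) else 0)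
        = ∑ k, (if k = K t ∧ (0:Fin 2) = L i then (1:ℝ) else 0)
    rw [hcol, hcol]
  · show (if k = K j ∧ (0:Fin 2) = L i then (1:ℝ) else 0)
        + (if k = K j ∧ (1:Fin 2) = L i then (1:ℝ) else 0)
        = (if k = K j ∧ (0:Fin 2) = L s then (1:ℝ) else 0)
        + (if k = K j ∧ (1:Fin 2) = L s then (1:ℝ) else 0)
    have h2 : ∀ (c : Prop) [Decidable c] (L0 : Fin 2),
        (if c ∧ (0:Fin 2) = L0 then (1:ℝ) else 0)
          + (if c ∧ (1:Fin 2) = L0 then (1:ℝ) else 0) = if c then 1 else 0 := by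
      intro c _ L0; fin_cases L0 <;> simp
    rw [h2, h2]
  · unfold vert; split_ifs <;> norm_num
  · unfold vert; split_ifs <;> simp

lemma sum_eq_one_unique {α : Type*} [DecidableEq α] {s : Finset α} {f : α → ℝ}
    (h0 : ∀ a ∈ s, 0 ≤ f a) (hsum : ∑ a ∈ s, f a = 1)
    {a b : α} (ha : a ∈ s) (hfa : f a = 1) (hb : b ∈ s) (hab : b ≠ a) : f b = 0 := by
  have h1 : f a + ∑ x ∈ s.erase a, f x = 1 := by
    rw [Finset.add_sum_erase s f ha]; exact hsum
  have h2 : ∑ x ∈ s.erase a, f x = 0 := by linarith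
  have := (Finset.sum_eq_zero_iff_of_nonneg
    (fun x hx => h0 x (Finset.mem_of_mem_erase hx))).mp h2
  exact this b (Finset.mem_erase.mpr ⟨hab, hb⟩)

lemma fin2_eq {a b : Fin 2} (h : a ≠ 0) (h' : b ≠ 0) : a = b := by
  fin_cases a <;> fin_cases b <;> simp_all

lemma structural {m n : ℕ} (hm : 0 < m) (hn : 0 < n) {x : Pt m n}
    (hx : x ∈ IntPts m n) : ∃ K L, x = vert K L := by
  obtain ⟨⟨h1, h2, h3, h4⟩, h01⟩ := hx
  -- rewrite the double sum as a sum over pairs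
  have h1' : ∀ i j, ∑ p : Fin 3 × Fin 2, x i j p.1 p.2 = 1 := by
    intro i j
    rw [Fintype.sum_prod_type]
    exact h1 i j
  -- existence of a 1
  have hex : ∀ i j, ∃ k l, x i j k l = 1 := by
    intro i j
    by_contra hc
    push_neg at hc
    have hz : ∀ k l, x i j k l = 0 := fun k l => (h01 i j k l).resolve_right (hc k l)
    have := h1 i j
    simp [hz] at this
  choose fk fl hfx using hex
  -- uniqueness of the 1
  have unique1 : ∀ i j k l, (k ≠ fk i j ∨ l ≠ fl i j) → x i j k l = 0 := by
    intro i j k l hne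
    refine sum_eq_one_unique (f := fun p : Fin 3 × Fin 2 => x i j p.1 p.2)
      (fun p _ => h4 i j p.1 p.2) (h1' i j) (a := (fk i j, fl i j)) (Finset.mem_univ _)
      (hfx i j) (Finset.mem_univ (k, l)) ?_
    intro hp
    rcases hne with hne | hne <;> simp [Prod.ext_iff] at hp <;> tauto
  -- column sums
  have hcol : ∀ i j, ∑ k, x i j k 0 = if fl i j = 0 then 1 else 0 := by
    intro i j
    by_cases h : fl i j = 0
    · rw [if_pos h]
      rw [Finset.sum_eq_single (fk i j)]
      · rw [← h]; exact hfx i j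
      · intro k _ hk; exact unique1 i j k 0 (Or.inl hk)
      · simp
    · rw [if_neg h]
      apply Finset.sum_eq_zero
      intro k _
      exact unique1 i j k 0 (Or.inr (fun h0 => h h0.symm))
  have hfl : ∀ i j t, fl i j = fl i t := by
    intro i j t
    have h2' := h2 i j t
    rw [hcol, hcol] at h2'
    split_ifs at h2' with ha hb hb
    · rw [ha, hb]
    · norm_num at h2'
    · norm_num at h2'
    · exact fin2_eq ha hb
  -- row sums
  have hrow : ∀ i j k, x i j k 0 + x i j k 1 = if k = fk i j then 1 else 0 := by
    intro i j k
    by_cases h : k = fk i j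
    · rw [if_pos h]
      by_cases h' : fl i j = 0
      · have e1 : x i j k 0 = 1 := by rw [h, ← h']; exact hfx i j
        have e2 : x i j k 1 = 0 := unique1 i j k 1 (Or.inr (by rw [h']; decide))
        linarith
      · have h'' : fl i j = 1 := fin2_eq h' (by decide)
        have e1 : x i j k 1 = 1 := by rw [h, ← h'']; exact hfx i j
        have e2 : x i j k 0 = 0 := unique1 i j k 0 (Or.inr (by rw [h'']; decide))
        linarith
    · rw [if_neg h, unique1 i j k 0 (Or.inl h), unique1 i j k 1 (Or.inl h)]
      norm_num
  have hfk : ∀ i s j, fk i j = fk s j := by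
    intro i s j
    have h3' := h3 (fk i j) j i s
    rw [hrow, hrow, if_pos rfl] at h3'
    split_ifs at h3' with h
    · exact h
    · norm_num at h3'
  set i0 : Fin m := ⟨0, hm⟩
  set j0 : Fin n := ⟨0, hn⟩
  refine ⟨fun j => fk i0 j, fun i => fl i j0, ?_⟩
  funext i j k l
  show x i j k l = if k = fk i0 j ∧ l = fl i j0 then 1 else 0
  by_cases hc : k = fk i0 j ∧ l = fl i j0
  · rw [if_pos hc]
    have hk : k = fk i j := by rw [hc.1, hfk i0 i j]
    have hl : l = fl i j := by rw [hc.2, hfl i j0 j]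
    rw [hk, hl]; exact hfx i j
  · rw [if_neg hc]
    rw [not_and_or] at hc
    refine unique1 i j k l ?_
    rcases hc with hc | hc
    · exact Or.inl (by rw [hfk i i0 j]; exact hc)
    · exact Or.inr (by rw [hfl i j j0]; exact hc)

lemma key {m n : ℕ} (Ka Kb K : Fin n → Fin 3) (La Lb L : Fin m → Fin 2)
    (tm : Fin m) (tn : Fin n) (hK : Ka tn ≠ Kb tn) (hL : La tm ≠ Lb tm)
    (hcond : ∀ i j, (K j = Ka j ∧ L i = La i) ∨ (K j = Kb j ∧ L i = Lb i)) :
    (K = Ka ∧ L = La) ∨ (K = Kb ∧ L = Lb) := by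
  rcases hcond tm tn with ⟨hk, hl⟩ | ⟨hk, hl⟩
  · left
    have hLeq : L = La := by
      funext i
      rcases hcond i tn with ⟨_, h⟩ | ⟨hk', _⟩
      · exact h
      · exact absurd (hk ▸ hk' : Ka tn = Kb tn) hK
    refine ⟨?_, hLeq⟩
    funext j
    rcases hcond tm j with ⟨h, _⟩ | ⟨_, hl'⟩
    · exact h
    · exact absurd (hl ▸ hl' : La tm = Lb tm) hL
  · right
    have hLeq : L = Lb := by
      funext i
      rcases hcond i tn with ⟨hk', _⟩ | ⟨_, h⟩
      · exact absurd (hk ▸ hk' : Kb tn = Ka tn).symm hK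
      · exact h
    refine ⟨?_, hLeq⟩
    funext j
    rcases hcond tm j with ⟨_, hl'⟩ | ⟨h, _⟩
    · exact absurd (hl ▸ hl' : Lb tm = La tm).symm hL
    · exact h

/-- embedding of Fin 2 into Fin 3 -/
def emb23 : Fin 2 → Fin 3 := fun x => ⟨x.val, by omega⟩

lemma emb23_inj : Function.Injective emb23 := by
  intro a b h
  have : (emb23 a).val = (emb23 b).val := congrArg Fin.val h
  exact Fin.ext this

noncomputable def Kf (m n : ℕ) (a : Fin (min m n) → Fin 2) : Fin n → Fin 3 :=
  fun j => if h : j.val < min m n then emb23 (a ⟨j.val, h⟩) else 0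

noncomputable def Lf (m n : ℕ) (a : Fin (min m n) → Fin 2) : Fin m → Fin 2 :=
  fun i => if h : i.val < min m n then a ⟨i.val, h⟩ else 0

noncomputable def Vf (m n : ℕ) (a : Fin (min m n) → Fin 2) : Pt m n :=
  vert (Kf m n a) (Lf m n a)

lemma KL_ne {m n : ℕ} {a b : Fin (min m n) → Fin 2} {t : Fin (min m n)}
    (ht : a t ≠ b t) :
    Kf m n a ⟨t.val, lt_of_lt_of_le t.2 (min_le_right m n)⟩
      ≠ Kf m n b ⟨t.val, lt_of_lt_of_le t.2 (min_le_right m n)⟩ ∧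
    Lf m n a ⟨t.val, lt_of_lt_of_le t.2 (min_le_left m n)⟩
      ≠ Lf m n b ⟨t.val, lt_of_lt_of_le t.2 (min_le_left m n)⟩ := by
  constructor
  · unfold Kf
    rw [dif_pos t.2, dif_pos t.2]
    intro h
    exact ht (emb23_inj h)
  · unfold Lf
    rw [dif_pos t.2, dif_pos t.2]
    exact ht

lemma Vf_inj (m n : ℕ) : Function.Injective (Vf m n) := by
  intro a b hab
  by_contra hne
  obtain ⟨t, ht⟩ := Function.ne_iff.mp hne
  obtain ⟨hK, hL⟩ := KL_ne ht
  set tm : Fin m := ⟨t.val, lt_of_lt_of_le t.2 (min_le_left m n)⟩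
  set tn : Fin n := ⟨t.val, lt_of_lt_of_le t.2 (min_le_right m n)⟩
  have h1 : Vf m n a tm tn (Kf m n a tn) (Lf m n a tm) = 1 :=
    (vert_eq_one_iff _ _ _ _ _ _).mpr ⟨rfl, rfl⟩
  have h2 : Vf m n b tm tn (Kf m n a tn) (Lf m n a tm) ≠ 1 := by
    intro h
    exact hK ((vert_eq_one_iff _ _ _ _ _ _).mp h).1
  rw [hab] at h1
  exact h2 h1

/-- there is a set W of integral points of SATP_LP(m,n) of cardinality
2^{min(m,n)} whose elements are pairwise adjacent as vertices of SATP(m,n); hence the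
clique number of the 1-skeleton of SATP(m,n) is at least 2^{min(m,n)}. -/
theorem stmt11 (m n : ℕ) (hm : 0 < m) (hn : 0 < n) :
    ∃ W : Finset (Pt m n),
      ↑W ⊆ IntPts m n ∧ W.card = 2 ^ min m n ∧
      ∀ u ∈ W, ∀ v ∈ W, u ≠ v → IsAdjacent u v := by
  classical
  refine ⟨Finset.image (Vf m n) Finset.univ, ?_, ?_, ?_⟩
  · intro x hx
    simp only [Finset.coe_image, Set.mem_image] at hx
    obtain ⟨a, _, rfl⟩ := hx
    exact vert_mem _ _
  · rw [Finset.card_image_of_injective _ (Vf_inj m n), Finset.card_univ]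
    simp
  · intro u hu v hv huv
    obtain ⟨a, _, rfl⟩ := Finset.mem_image.mp hu
    obtain ⟨b, _, rfl⟩ := Finset.mem_image.mp hv
    have hab : a ≠ b := fun h => huv (by rw [h])
    obtain ⟨tt, htt⟩ := Function.ne_iff.mp hab
    obtain ⟨hKab, hLab⟩ := KL_ne htt
    set tm : Fin m := ⟨tt.val, lt_of_lt_of_le tt.2 (min_le_left m n)⟩
    set tn : Fin n := ⟨tt.val, lt_of_lt_of_le tt.2 (min_le_right m n)⟩
    refine ⟨vert_mem _ _, vert_mem _ _, huv, ?_⟩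
    rw [Set.eq_empty_iff_forall_notMem]
    rintro z ⟨hseg, hhull⟩
    obtain ⟨c, d, hc, hd, hcd, hz⟩ := hseg
    rw [_root_.convexHull_eq] at hhull
    obtain ⟨ι, t, w, zf, hw0, hw1, hzfS, hcm⟩ := hhull
    rw [Finset.centerMass_eq_of_sum_1 _ _ hw1] at hcm
    have hpos : ∃ i0 ∈ t, 0 < w i0 := by
      by_contra hc'
      push_neg at hc'
      have h0 : ∑ i ∈ t, w i = 0 :=
        Finset.sum_eq_zero (fun i hi => le_antisymm (hc' i hi) (hw0 i hi))
      rw [hw1] at h0; norm_num at h0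
    obtain ⟨i0, hi0, hwi0⟩ := hpos
    have hw₀Int : zf i0 ∈ IntPts m n := (hzfS i0 hi0).1
    have hw₀ne : zf i0 ∉ ({Vf m n a, Vf m n b} : Set (Pt m n)) := (hzfS i0 hi0).2
    -- support property
    have hsupp : ∀ i j k l, zf i0 i j k l = 1 →
        (Vf m n a i j k l = 1 ∨ Vf m n b i j k l = 1) := by
      intro i j k l h1
      have hzc : z i j k l = ∑ x ∈ t, w x * zf x i j k l := by
        rw [← hcm]
        simp [Finset.sum_apply, Pi.smul_apply, smul_eq_mul]
      have hzpos : 0 < z i j k l := by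
        rw [hzc]
        have hterm : (fun x => w x * zf x i j k l) i0 = w i0 := by
          simp only [h1, mul_one]
        have hle : w i0 ≤ ∑ x ∈ t, w x * zf x i j k l := by
          rw [← hterm]
          exact Finset.single_le_sum
            (f := fun x => w x * zf x i j k l)
            (fun x hx => mul_nonneg (hw0 x hx) ((hzfS x hx).1.1.2.2.2 i j k l)) hi0
        linarith
      have hz' : z i j k l = c * Vf m n a i j k l + d * Vf m n b i j k l := by
        rw [← hz]; simp
      by_contra hcon
      push_neg at hcon
      obtain ⟨hne1, hne2⟩ := hcon
      have hu0 : Vf m n a i j k l = 0 :=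
        ((vert_mem (Kf m n a) (Lf m n a)).2 i j k l).resolve_right hne1
      have hv0 : Vf m n b i j k l = 0 :=
        ((vert_mem (Kf m n b) (Lf m n b)).2 i j k l).resolve_right hne2
      rw [hz', hu0, hv0] at hzpos
      norm_num at hzpos
    -- structure of zf i0
    obtain ⟨K, L, weq⟩ := structural hm hn hw₀Int
    have hcond : ∀ i j, (K j = Kf m n a j ∧ L i = Lf m n a i)
        ∨ (K j = Kf m n b j ∧ L i = Lf m n b i) := by
      intro i j
      have h1 : zf i0 i j (K j) (L i) = 1 := by
        rw [weq]; exact (vert_eq_one_iff _ _ _ _ _ _).mpr ⟨rfl, rfl⟩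
      rcases hsupp i j (K j) (L i) h1 with h | h
      · exact Or.inl ((vert_eq_one_iff _ _ _ _ _ _).mp h)
      · exact Or.inr ((vert_eq_one_iff _ _ _ _ _ _).mp h)
    rcases key (Kf m n a) (Kf m n b) K (Lf m n a) (Lf m n b) L tm tn hKab hLab hcond with
      ⟨hK', hL'⟩ | ⟨hK', hL'⟩
    · exact hw₀ne (by rw [weq, hK', hL']; exact Set.mem_insert _ _)
    · exact hw₀ne (by rw [weq, hK', hL']; exact Set.mem_insert_of_mem _ rfl)
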